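/- For the two-variable case of the interpolation procedure: let m, n be positive integers, θ ∈ [0,1], and p, q, r ∈ [1,∞)^m with 1/r_i = θ/p_i + (1-θ)/q_i for each i. Then for every scalar matrix a = (a_i)_{i ∈ {1,…,n}^m}, ‖a‖_r ≤ ‖a‖_p^θ · ‖a‖_q^{1-θ}. -/

import Mathlib

open Finset

/-- The mixed `ℓ_{p_1}(ℓ_{p_2}(⋯ℓ_{p_m}))` norm of a scalar matrix
`a = (a_i)_{i ∈ {1,…,n}^m}`. -/
noncomputable def mixedNorm (n : ℕ) : (m : ℕ) → (Fin m → ℝ) → ((Fin m → Fin n) → ℂ) → ℝ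
  | 0, _, a => ‖a (fun i => i.elim0)‖
  | m + 1, p, a =>
      (∑ j : Fin n,
        (mixedNorm n m (fun i => p i.succ) (fun f => a (Fin.cons j f))) ^ p 0) ^ (1 / p 0)

lemma mixedNorm_nonneg (n m : ℕ) (p : Fin m → ℝ) (a : (Fin m → Fin n) → ℂ) :
    0 ≤ mixedNorm n m p a := by
  induction m with
  | zero => exact norm_nonneg _
  | succ m ih =>
      exact Real.rpow_nonneg
        (Finset.sum_nonneg fun j _ => Real.rpow_nonneg (ih _ _) _) _

/-- Scalar interpolation step via Hölder's inequality. -/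
lemma key_interp {n : ℕ} {θ p q r : ℝ} (hθ0 : 0 < θ) (hθ1 : θ < 1)
    (hp : 1 ≤ p) (hq : 1 ≤ q) (hr : 1 ≤ r)
    (hconv : 1 / r = θ / p + (1 - θ) / q)
    (A B : Fin n → ℝ) (hA : ∀ j, 0 ≤ A j) (hB : ∀ j, 0 ≤ B j) :
    (∑ j, (A j ^ θ * B j ^ (1 - θ)) ^ r) ^ (1 / r) ≤
      ((∑ j, A j ^ p) ^ (1 / p)) ^ θ * ((∑ j, B j ^ q) ^ (1 / q)) ^ (1 - θ) := by
  have hr0 : (0:ℝ) < r := lt_of_lt_of_le one_pos hr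
  have hp0 : (0:ℝ) < p := lt_of_lt_of_le one_pos hp
  have hq0 : (0:ℝ) < q := lt_of_lt_of_le one_pos hq
  have hθ1' : (0:ℝ) < 1 - θ := by linarith
  set s := p / (θ * r) with hs
  set t := q / ((1 - θ) * r) with ht
  have hθr : (0:ℝ) < θ * r := by positivity
  have hθr' : (0:ℝ) < (1 - θ) * r := by positivity
  have hst : Real.HolderConjugate s t := by
    rw [Real.holderConjugate_iff]
    constructor
    · rw [hs, lt_div_iff₀ hθr, one_mul]
      have h1 : θ / p < 1 / r := by
        have h2 : 0 < (1 - θ) / q := by positivity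
        linarith
      rw [div_lt_div_iff₀ hp0 hr0] at h1
      linarith
    · rw [hs, ht, inv_div, inv_div]
      have : θ * r / p + (1 - θ) * r / q = r * (θ / p + (1 - θ) / q) := by ring
      rw [this, ← hconv]
      field_simp
  have hH := Real.inner_le_Lp_mul_Lq Finset.univ
      (fun j => A j ^ (θ * r)) (fun j => B j ^ ((1 - θ) * r)) hst
  simp only [abs_of_nonneg (Real.rpow_nonneg (hA _) _),
    abs_of_nonneg (Real.rpow_nonneg (hB _) _), ← Real.rpow_natCast] at hH
  have hfs : ∀ j : Fin n, (A j ^ (θ * r)) ^ s = A j ^ p := by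
    intro j
    rw [← Real.rpow_mul (hA j), hs]
    congr 1
    field_simp
  have hgt : ∀ j : Fin n, (B j ^ ((1 - θ) * r)) ^ t = B j ^ q := by
    intro j
    rw [← Real.rpow_mul (hB j), ht]
    congr 1
    field_simp
  have habs : ∀ j : Fin n, |A j ^ (θ * r)| ^ s = A j ^ p := by
    intro j; rw [abs_of_nonneg (Real.rpow_nonneg (hA j) _), hfs j]
  have habs' : ∀ j : Fin n, |B j ^ ((1 - θ) * r)| ^ t = B j ^ q := by
    intro j; rw [abs_of_nonneg (Real.rpow_nonneg (hB j) _), hgt j]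
  have hH' : ∑ j : Fin n, (A j ^ θ * B j ^ (1 - θ)) ^ r ≤
      (∑ j : Fin n, A j ^ p) ^ (1 / s) * (∑ j : Fin n, B j ^ q) ^ (1 / t) := by
    have hHH := Real.inner_le_Lp_mul_Lq Finset.univ
      (fun j => A j ^ (θ * r)) (fun j => B j ^ ((1 - θ) * r)) hst
    simp only [habs, habs'] at hHH
    refine le_trans (le_of_eq ?_) hHH
    apply Finset.sum_congr rfl
    intro j _
    rw [Real.mul_rpow (Real.rpow_nonneg (hA j) _) (Real.rpow_nonneg (hB j) _),
      ← Real.rpow_mul (hA j), ← Real.rpow_mul (hB j)]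
  have hsum1 : (0:ℝ) ≤ ∑ j : Fin n, (A j ^ θ * B j ^ (1 - θ)) ^ r :=
    Finset.sum_nonneg fun j _ => Real.rpow_nonneg (mul_nonneg (Real.rpow_nonneg (hA j) _) (Real.rpow_nonneg (hB j) _)) _
  have hsumA : (0:ℝ) ≤ ∑ j : Fin n, A j ^ p :=
    Finset.sum_nonneg fun j _ => Real.rpow_nonneg (hA j) _
  have hsumB : (0:ℝ) ≤ ∑ j : Fin n, B j ^ q :=
    Finset.sum_nonneg fun j _ => Real.rpow_nonneg (hB j) _
  have hfin := Real.rpow_le_rpow hsum1 hH' (by positivity : (0:ℝ) ≤ 1 / r)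
  refine le_trans hfin (le_of_eq ?_)
  rw [Real.mul_rpow (Real.rpow_nonneg hsumA _) (Real.rpow_nonneg hsumB _),
    ← Real.rpow_mul hsumA, ← Real.rpow_mul hsumB,
    ← Real.rpow_mul hsumA, ← Real.rpow_mul hsumB]
  congr 1
  · congr 1
    rw [hs]
    field_simp
  · congr 1
    rw [ht]
    field_simp

lemma mixedNorm_interp_aux (n : ℕ) (θ : ℝ) (hθ0 : 0 < θ) (hθ1 : θ < 1) :
    ∀ (m : ℕ) (p q r : Fin m → ℝ), (∀ i, 1 ≤ p i) → (∀ i, 1 ≤ q i) → (∀ i, 1 ≤ r i) →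
    (∀ i, 1 / r i = θ / p i + (1 - θ) / q i) →
    ∀ a : (Fin m → Fin n) → ℂ,
    mixedNorm n m r a ≤ (mixedNorm n m p a) ^ θ * (mixedNorm n m q a) ^ (1 - θ)
  | 0, p, q, r, hp, hq, hr, hconv, a => by
      show ‖a (fun i => i.elim0)‖ ≤
        ‖a (fun i => i.elim0)‖ ^ θ * ‖a (fun i => i.elim0)‖ ^ (1 - θ)
      rcases eq_or_lt_of_le (norm_nonneg (a fun i => i.elim0)) with h | h
      · rw [← h, Real.zero_rpow (ne_of_gt hθ0), zero_mul]
      · rw [← Real.rpow_add h, add_sub_cancel, Real.rpow_one]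
  | m + 1, p, q, r, hp, hq, hr, hconv, a => by
      show (∑ j : Fin n, _ ^ r 0) ^ (1 / r 0) ≤ _
      set A : Fin n → ℝ :=
        fun j => mixedNorm n m (fun i => p i.succ) (fun f => a (Fin.cons j f)) with hAdef
      set B : Fin n → ℝ :=
        fun j => mixedNorm n m (fun i => q i.succ) (fun f => a (Fin.cons j f)) with hBdef
      set C : Fin n → ℝ :=
        fun j => mixedNorm n m (fun i => r i.succ) (fun f => a (Fin.cons j f)) with hCdef
      have hA : ∀ j, 0 ≤ A j := fun j => mixedNorm_nonneg _ _ _ _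
      have hB : ∀ j, 0 ≤ B j := fun j => mixedNorm_nonneg _ _ _ _
      have hC : ∀ j, 0 ≤ C j := fun j => mixedNorm_nonneg _ _ _ _
      have IH : ∀ j, C j ≤ A j ^ θ * B j ^ (1 - θ) := fun j =>
        mixedNorm_interp_aux n θ hθ0 hθ1 m (fun i => p i.succ) (fun i => q i.succ)
          (fun i => r i.succ) (fun i => hp i.succ) (fun i => hq i.succ)
          (fun i => hr i.succ) (fun i => hconv i.succ) (fun f => a (Fin.cons j f))
      have hr0 : (0:ℝ) < r 0 := lt_of_lt_of_le one_pos (hr 0)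
      have step1 : (∑ j : Fin n, C j ^ r 0) ^ (1 / r 0) ≤
          (∑ j : Fin n, (A j ^ θ * B j ^ (1 - θ)) ^ r 0) ^ (1 / r 0) := by
        apply Real.rpow_le_rpow
          (Finset.sum_nonneg fun j _ => Real.rpow_nonneg (hC j) _)
          (Finset.sum_le_sum fun j _ =>
            Real.rpow_le_rpow (hC j) (IH j) (le_of_lt hr0))
          (by positivity)
      exact le_trans step1
        (key_interp hθ0 hθ1 (hp 0) (hq 0) (hr 0) (hconv 0) A B hA hB)

/-- **Two-exponent interpolation for mixed norms**: if `θ ∈ [0,1]` and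
`1/r_i = θ/p_i + (1-θ)/q_i` for each `i`, then
`‖a‖_r ≤ ‖a‖_p^θ ⬝ ‖a‖_q^{1-θ}` for every scalar matrix `a`. -/
theorem mixedNorm_interpolation_two (m n : ℕ) (hm : 0 < m) (hn : 0 < n)
    (θ : ℝ) (hθ0 : 0 ≤ θ) (hθ1 : θ ≤ 1)
    (p q r : Fin m → ℝ) (hp : ∀ i, 1 ≤ p i) (hq : ∀ i, 1 ≤ q i) (hr : ∀ i, 1 ≤ r i)
    (hconv : ∀ i, 1 / r i = θ / p i + (1 - θ) / q i)
    (a : (Fin m → Fin n) → ℂ) :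
    mixedNorm n m r a ≤ (mixedNorm n m p a) ^ θ * (mixedNorm n m q a) ^ (1 - θ) := by
  rcases eq_or_lt_of_le hθ0 with h0 | h0
  · -- θ = 0 : r = q
    have hrq : r = q := by
      funext i
      have h := hconv i
      rw [← h0] at h
      have hri : r i ≠ 0 := by have := hr i; positivity
      have hqi : q i ≠ 0 := by have := hq i; positivity
      field_simp at h
      simp at h
      linarith
    rw [hrq, ← h0, Real.rpow_zero, sub_zero, Real.rpow_one, one_mul]
  rcases eq_or_lt_of_le hθ1 with h1 | h1
  · -- θ = 1 : r = p
    have hrp : r = p := by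
      funext i
      have h := hconv i
      rw [h1] at h
      have hri : r i ≠ 0 := by have := hr i; positivity
      have hpi : p i ≠ 0 := by have := hp i; positivity
      simp only [sub_self, zero_div, add_zero] at h
      field_simp at h
      linarith
    rw [hrp, h1, Real.rpow_one, sub_self, Real.rpow_zero, mul_one]
  exact mixedNorm_interp_aux n θ h0 h1 m p q r hp hq hr hconv a
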